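/- The push forward of the canonical form of [1,2] through the squaring map equals the canonical form of [1,4]: the map y = x² has two local inverses ±√y, and d log((√y - 1)/(√y - 2)) + d log((-√y - 1)/(-√y - 2)) = d log((y-1)/(y-4)). -/
import Mathlib


/-- Push forward of the canonical form of [1,2] through y = x²: the sum over the two local
inverse branches ±√y of the pulled-back dlog coefficients equals the canonical-form
coefficient of [1,4]. -/
theorem stmt_15 (y s : ℂ) (hsy : s ^ 2 = y) (hs : s ≠ 0) (h1 : y ≠ 1) (h4 : y ≠ 4) :
    (1 / (2 * s)) * (1 / (s - 1) - 1 / (s - 2)) +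
      (-(1 / (2 * s))) * (1 / (-s - 1) - 1 / (-s - 2)) =
    1 / (y - 1) - 1 / (y - 4) := by
  subst hsy
  have h1' : s - 1 ≠ 0 := fun h => h1 (by linear_combination (s + 1) * h)
  have h1'' : s + 1 ≠ 0 := fun h => h1 (by linear_combination (s - 1) * h)
  have h2' : s - 2 ≠ 0 := fun h => h4 (by linear_combination (s + 2) * h)
  have h2'' : s + 2 ≠ 0 := fun h => h4 (by linear_combination (s - 2) * h)
  have hm1 : -s - 1 ≠ 0 := fun h => h1'' (by linear_combination -h)
  have hm2 : -s - 2 ≠ 0 := fun h => h2'' (by linear_combination -h)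
  have hy1 : s ^ 2 - 1 ≠ 0 := fun h => h1 (by linear_combination h)
  have hy4 : s ^ 2 - 4 ≠ 0 := fun h => h4 (by linear_combination h)
  field_simp
  ring
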